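/- Let {A_k : ℝ^m → ℝ^m, k ∈ ℤ} be a sequence of linear isomorphisms for which there is a constant N > 0 with ‖A_k‖ ≤ N and ‖A_k⁻¹‖ ≤ N for all k. Assume that for every bounded sequence {w_k ∈ ℝ^m, k ∈ ℤ} there exists a bounded sequence {v_k ∈ ℝ^m, k ∈ ℤ} such that v_{k+1} = A_k v_k + w_k for all k ∈ ℤ. Then the sequence {A_k} is hyperbolic on the ray (−∞, 0]. -/

import Mathlib

open Filter Topology

/-- Transition map `Φ(k,l)` for `k = l + n`, `n ≥ 0`:
`Φ(l+n+1, l) = A_{l+n} ∘ Φ(l+n, l)`. -/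
noncomputable def PhiPos {m : ℕ}
    (A : ℤ → (EuclideanSpace ℝ (Fin m) ≃L[ℝ] EuclideanSpace ℝ (Fin m))) (l : ℤ) :
    ℕ → (EuclideanSpace ℝ (Fin m) →L[ℝ] EuclideanSpace ℝ (Fin m))
  | 0 => 1
  | n + 1 =>
      ((A (l + n) : EuclideanSpace ℝ (Fin m) →L[ℝ] EuclideanSpace ℝ (Fin m))).comp
        (PhiPos A l n)

/-- Transition map `Φ(k,l)` for `l = k + n`, `n ≥ 0`:
`Φ(k, k+n+1) = Φ(k, k+n) ∘ A_{k+n}⁻¹`. -/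
noncomputable def PhiNeg {m : ℕ}
    (A : ℤ → (EuclideanSpace ℝ (Fin m) ≃L[ℝ] EuclideanSpace ℝ (Fin m))) (k : ℤ) :
    ℕ → (EuclideanSpace ℝ (Fin m) →L[ℝ] EuclideanSpace ℝ (Fin m))
  | 0 => 1
  | n + 1 =>
      (PhiNeg A k n).comp
        (((A (k + n)).symm : EuclideanSpace ℝ (Fin m) →L[ℝ] EuclideanSpace ℝ (Fin m)))

/-- The transition maps `Φ(k,l)`: `Φ(k,l) = A_{k-1} ∘ ⋯ ∘ A_l` for `l < k`,
`Φ(k,k) = Id`, and `Φ(k,l) = A_k⁻¹ ∘ ⋯ ∘ A_{l-1}⁻¹` for `l > k`. -/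
noncomputable def Phi {m : ℕ}
    (A : ℤ → (EuclideanSpace ℝ (Fin m) ≃L[ℝ] EuclideanSpace ℝ (Fin m))) (k l : ℤ) :
    EuclideanSpace ℝ (Fin m) →L[ℝ] EuclideanSpace ℝ (Fin m) :=
  if l ≤ k then PhiPos A l (k - l).toNat else PhiNeg A k (l - k).toNat

/-- `B⁺(𝒜) = {v : ‖Φ(k,0)v‖ → 0 as k → +∞}`. -/
def Bplus {m : ℕ}
    (A : ℤ → (EuclideanSpace ℝ (Fin m) ≃L[ℝ] EuclideanSpace ℝ (Fin m))) :
    Set (EuclideanSpace ℝ (Fin m)) :=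
  {v | Tendsto (fun k : ℤ => ‖Phi A k 0 v‖) atTop (𝓝 0)}

/-- `B⁻(𝒜) = {v : ‖Φ(k,0)v‖ → 0 as k → -∞}`. -/
def Bminus {m : ℕ}
    (A : ℤ → (EuclideanSpace ℝ (Fin m) ≃L[ℝ] EuclideanSpace ℝ (Fin m))) :
    Set (EuclideanSpace ℝ (Fin m)) :=
  {v | Tendsto (fun k : ℤ => ‖Phi A k 0 v‖) atBot (𝓝 0)}

/-- The sequence `𝒜` is hyperbolic on the ray `[0, +∞)`. -/
def HyperbolicOnPlusRay {m : ℕ}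
    (A : ℤ → (EuclideanSpace ℝ (Fin m) ≃L[ℝ] EuclideanSpace ℝ (Fin m))) : Prop :=
  ∃ (C lam : ℝ)
    (P : ℤ → (EuclideanSpace ℝ (Fin m) →L[ℝ] EuclideanSpace ℝ (Fin m))),
    0 < C ∧ lam ∈ Set.Ioo (0 : ℝ) 1 ∧
    (∀ k : ℤ, 0 ≤ k → (P k).comp (P k) = P k) ∧
    (∀ k l : ℤ, 0 ≤ k → 0 ≤ l → (P k).comp (Phi A k l) = (Phi A k l).comp (P l)) ∧
    (∀ k l : ℤ, 0 ≤ l → l ≤ k → ∀ v : EuclideanSpace ℝ (Fin m),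
      ‖Phi A k l (P l v)‖ ≤ C * lam ^ (k - l).toNat * ‖v‖) ∧
    (∀ k l : ℤ, 0 ≤ k → k ≤ l → ∀ v : EuclideanSpace ℝ (Fin m),
      ‖Phi A k l ((1 - P l) v)‖ ≤ C * lam ^ (l - k).toNat * ‖v‖)

/-- The sequence `𝒜` is hyperbolic on the ray `(-∞, 0]`. -/
def HyperbolicOnMinusRay {m : ℕ}
    (A : ℤ → (EuclideanSpace ℝ (Fin m) ≃L[ℝ] EuclideanSpace ℝ (Fin m))) : Prop :=
  ∃ (C lam : ℝ)
    (Q : ℤ → (EuclideanSpace ℝ (Fin m) →L[ℝ] EuclideanSpace ℝ (Fin m))),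
    0 < C ∧ lam ∈ Set.Ioo (0 : ℝ) 1 ∧
    (∀ k : ℤ, k ≤ 0 → (Q k).comp (Q k) = Q k) ∧
    (∀ k l : ℤ, k ≤ 0 → l ≤ 0 → (Q k).comp (Phi A k l) = (Phi A k l).comp (Q l)) ∧
    (∀ k l : ℤ, l ≤ k → k ≤ 0 → ∀ v : EuclideanSpace ℝ (Fin m),
      ‖Phi A k l (Q l v)‖ ≤ C * lam ^ (k - l).toNat * ‖v‖) ∧
    (∀ k l : ℤ, k ≤ l → l ≤ 0 → ∀ v : EuclideanSpace ℝ (Fin m),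
      ‖Phi A k l ((1 - Q l) v)‖ ≤ C * lam ^ (l - k).toNat * ‖v‖)

/-- Choice of subspaces: given `Xs ⊔ U = ⊤`, there are `W ≤ Xs` complementing `U`
and `V' ⊇ W` complementing `V = Xs ⊓ U` with `Xs ⊓ V' = W`. -/
lemma subspace_choice {M : Type*} [AddCommGroup M] [Module ℝ M]
    (Xs U : Submodule ℝ M) (hsplit : ∀ ξ : M, ξ ∈ Xs ⊔ U) :
    ∃ (W V' : Submodule ℝ M), W ≤ Xs ∧ W ≤ V' ∧ IsCompl U W ∧
      IsCompl (Xs ⊓ U) V' ∧ Xs ⊓ V' = W := by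
  classical
  obtain ⟨q, hq⟩ := Submodule.exists_isCompl ((Xs ⊓ U).comap Xs.subtype)
  have hWXs : q.map Xs.subtype ≤ Xs := Submodule.map_subtype_le _ _
  have hUW_disj : ∀ x : M, x ∈ U → x ∈ q.map Xs.subtype → x = 0 := by
    intro x hxU hxW
    obtain ⟨⟨y, hyXs⟩, hyq, rfl⟩ := hxW
    have hyV : (⟨y, hyXs⟩ : ↥Xs) ∈ (Xs ⊓ U).comap Xs.subtype := by
      simp only [Submodule.mem_comap, Submodule.coe_subtype]
      exact ⟨hyXs, hxU⟩
    have hd := hq.disjoint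
    rw [Submodule.disjoint_def] at hd
    have h0 := hd _ hyV hyq
    simp [h0]
  have hUW_sup : ∀ x : M, x ∈ U ⊔ q.map Xs.subtype := by
    intro x
    obtain ⟨a, haXs, b, hbU, hab⟩ := Submodule.mem_sup.mp (hsplit x)
    have h2 : (⟨a, haXs⟩ : ↥Xs) ∈ (Xs ⊓ U).comap Xs.subtype ⊔ q := by
      rw [hq.sup_eq_top]; trivial
    obtain ⟨y, hy, z, hz, hyz⟩ := Submodule.mem_sup.mp h2
    have hyU : (y : M) ∈ U := (Submodule.mem_comap.mp hy).2
    rw [Submodule.mem_sup]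
    refine ⟨b + (y : M), add_mem hbU hyU, (z : M), ⟨z, hz, rfl⟩, ?_⟩
    have h3 : (y : M) + (z : M) = a := congrArg Subtype.val hyz
    rw [← hab, ← h3]; abel
  have hcomplUW : IsCompl U (q.map Xs.subtype) := by
    constructor
    · rw [Submodule.disjoint_def]; exact hUW_disj
    · rw [codisjoint_iff, eq_top_iff]
      intro x _; exact hUW_sup x
  obtain ⟨W₂, hW₂⟩ := Submodule.exists_isCompl ((Xs ⊓ U) ⊔ q.map Xs.subtype)
  have hdW₂ := hW₂.disjoint
  rw [Submodule.disjoint_def] at hdW₂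
  have hXsVW : ∀ a : M, a ∈ Xs → a ∈ (Xs ⊓ U) ⊔ q.map Xs.subtype := by
    intro a ha
    obtain ⟨u, hu, w, hw, hsum⟩ := Submodule.mem_sup.mp (hUW_sup a)
    rw [Submodule.mem_sup]
    refine ⟨u, ⟨?_, hu⟩, w, hw, hsum⟩
    have h4 : u = a - w := by rw [← hsum]; abel
    rw [h4]
    exact sub_mem ha (hWXs hw)
  refine ⟨q.map Xs.subtype, q.map Xs.subtype ⊔ W₂, hWXs, le_sup_left, hcomplUW, ?_, ?_⟩
  · constructor
    · rw [Submodule.disjoint_def]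
      intro x hxV hxV'
      obtain ⟨w, hw, w₂, hw₂, hsum⟩ := Submodule.mem_sup.mp hxV'
      have hw2mem : w₂ ∈ (Xs ⊓ U) ⊔ q.map Xs.subtype := by
        have h5 : w₂ = x - w := by rw [← hsum]; abel
        rw [h5]
        exact sub_mem (Submodule.mem_sup_left hxV) (Submodule.mem_sup_right hw)
      have hw2zero : w₂ = 0 := hdW₂ _ hw2mem hw₂
      have hxw : x = w := by rw [← hsum, hw2zero, add_zero]
      exact hUW_disj x hxV.2 (hxw ▸ hw)
    · rw [codisjoint_iff, eq_top_iff]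
      intro x _
      have h6 : x ∈ ((Xs ⊓ U) ⊔ q.map Xs.subtype) ⊔ W₂ := by
        rw [hW₂.sup_eq_top]; trivial
      rw [sup_assoc] at h6
      exact h6
  · apply le_antisymm
    · intro z hz
      obtain ⟨hzXs, hzV'⟩ := hz
      obtain ⟨w, hw, w₂, hw₂, hsum⟩ := Submodule.mem_sup.mp hzV'
      have hw2mem : w₂ ∈ (Xs ⊓ U) ⊔ q.map Xs.subtype := by
        have h5 : w₂ = z - w := by rw [← hsum]; abel
        rw [h5]
        exact hXsVW _ (sub_mem hzXs (hWXs hw))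
      have hw2zero : w₂ = 0 := hdW₂ _ hw2mem hw₂
      have h7 : z = w := by rw [← hsum, hw2zero, add_zero]
      rw [h7]; exact hw
    · intro w hw
      exact ⟨hWXs hw, Submodule.mem_sup_left hw⟩
lemma Icc_bot_split (f : ℤ → ℝ) {a b : ℤ} (h : a ≤ b) :
    ∑ i ∈ Finset.Icc a b, f i = f a + ∑ i ∈ Finset.Icc (a+1) b, f i := by
  have he : Finset.Icc a b = insert a (Finset.Icc (a+1) b) := by
    ext i
    simp only [Finset.mem_Icc, Finset.mem_insert]
    omega
  rw [he, Finset.sum_insert (by simp only [Finset.mem_Icc]; omega)]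

lemma Icc_top_split (f : ℤ → ℝ) {a b : ℤ} (h : a ≤ b) :
    ∑ i ∈ Finset.Icc a b, f i = (∑ i ∈ Finset.Icc a (b-1), f i) + f b := by
  have he : Finset.Icc a b = insert b (Finset.Icc a (b-1)) := by
    ext i
    simp only [Finset.mem_Icc, Finset.mem_insert]
    omega
  rw [he, Finset.sum_insert (by simp only [Finset.mem_Icc]; omega)]
  ring

/-- Backward Gronwall-type lemma: if `a_j · ∑_{i=j+1}^{l} a_i⁻¹ ≤ K`, then `a`
grows geometrically backwards. -/
lemma gronwall_back (K : ℝ) (hK : 2 ≤ K) (a : ℤ → ℝ) (l : ℤ) (ha : ∀ i, 0 < a i)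
    (hbound : ∀ j, j ≤ l - 1 → a j * (∑ i ∈ Finset.Icc (j+1) l, (a i)⁻¹) ≤ K) :
    ∀ j, j ≤ l → a j ≤ (K+1) * (K/(K+1)) ^ (l-j).toNat * a l := by
  have hKpos : (0:ℝ) < K := by linarith
  have hK1 : (0:ℝ) < K + 1 := by linarith
  set τ : ℤ → ℝ := fun j => ∑ i ∈ Finset.Icc (j+1) l, (a i)⁻¹ with hτ
  have hτpos : ∀ j, j ≤ l - 1 → 0 < τ j := by
    intro j hj
    apply Finset.sum_pos
    · intro i _
      exact inv_pos.mpr (ha i)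
    · exact ⟨l, by simp only [Finset.mem_Icc]; omega⟩
  have hlow : ∀ n : ℕ, ((K+1)/K) ^ n / a l ≤ τ (l - 1 - n) := by
    intro n
    induction n with
    | zero =>
        have hτl : τ (l-1) = (a l)⁻¹ := by
          show (∑ i ∈ Finset.Icc (l - 1 + 1) l, (a i)⁻¹) = (a l)⁻¹
          rw [show l - 1 + 1 = l from by ring, Finset.Icc_self, Finset.sum_singleton]
        rw [show l - 1 - ((0:ℕ):ℤ) = l - 1 from by simp, hτl, pow_zero, one_div]
    | succ n ih =>
        have hsplit : τ (l - 1 - (n+1)) = (a (l - 1 - n))⁻¹ + τ (l - 1 - n) := by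
          rw [hτ]
          simp only []
          rw [show l - 1 - ((n:ℤ)+1) + 1 = (l - 1 - n) from by ring]
          rw [Icc_bot_split _ (show l - 1 - (n:ℤ) ≤ l from by omega)]
        have hb := hbound (l - 1 - n) (by omega)
        have hτn := hτpos (l - 1 - n) (by omega)
        have hpa := ha (l - 1 - n)
        have hb' : a (l - 1 - n) * τ (l - 1 - n) ≤ K := hb
        have h2 : (a (l-1-n))⁻¹ * (a (l-1-n)) = 1 := inv_mul_cancel₀ (ne_of_gt hpa)
        have hinv : τ (l - 1 - n) / K ≤ (a (l - 1 - n))⁻¹ := by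
          have h3 := mul_le_mul_of_nonneg_left hb' (le_of_lt (inv_pos.mpr hpa))
          rw [← mul_assoc, h2, one_mul] at h3
          rw [div_le_iff₀ hKpos]
          linarith [h3]
        have hmono : ((K+1)/K) * τ (l - 1 - n) ≤ τ (l - 1 - (n+1)) := by
          rw [hsplit]
          have h4 : ((K+1)/K) * τ (l - 1 - n) = τ (l - 1 - n) + τ (l - 1 - n) / K := by
            field_simp
          rw [h4]
          linarith [hinv]
        calc ((K+1)/K) ^ (n+1) / a l = ((K+1)/K) * (((K+1)/K) ^ n / a l) := by ring
          _ ≤ ((K+1)/K) * τ (l - 1 - n) := by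
              apply mul_le_mul_of_nonneg_left ih
              positivity
          _ ≤ τ (l - 1 - (n+1)) := hmono
  intro j hj
  rcases eq_or_lt_of_le hj with rfl | hjl
  · rw [show (j - j).toNat = 0 from by omega, pow_zero, mul_one]
    nlinarith [ha j]
  · set n : ℕ := (l - 1 - j).toNat with hn
    have hjn : l - 1 - (n:ℤ) = j := by omega
    have hlo := hlow n
    rw [hjn] at hlo
    have hτj : 0 < τ j := hτpos j (by omega)
    have hbj := hbound j (by omega)
    have hstep1 : a j ≤ K / τ j := by
      rw [le_div_iff₀ hτj]
      exact hbj
    have hge : ((K+1)/K) ^ n / a l > 0 :=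
      div_pos (pow_pos (by positivity) n) (ha l)
    have hstep2 : K / τ j ≤ K / (((K+1)/K) ^ n / a l) := by
      apply div_le_div_of_nonneg_left (by linarith) hge hlo
    have heq : K / (((K+1)/K) ^ n / a l) = K * (K/(K+1))^n * a l := by
      rw [show K/(K+1) = ((K+1)/K)⁻¹ by rw [inv_div], inv_pow, div_div_eq_mul_div, div_eq_mul_inv]
      ring
    have hfin : a j ≤ K * (K/(K+1))^n * a l := by
      rw [← heq]
      exact le_trans hstep1 hstep2
    have hexp : (l - j).toNat = n + 1 := by omega
    rw [hexp]
    calc a j ≤ K * (K/(K+1))^n * a l := hfin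
      _ = (K+1) * (K/(K+1))^(n+1) * a l := by
          rw [pow_succ, show (K+1) * ((K/(K+1))^n * (K/(K+1))) * a l = ((K+1) * (K/(K+1))) * (K/(K+1))^n * a l by ring, show (K+1) * (K/(K+1)) = K by field_simp]
/-- Forward Gronwall-type lemma. -/
lemma gronwall_fwd (K : ℝ) (hK : 2 ≤ K) (b : ℤ → ℝ) (l : ℤ) (hb : ∀ i, 0 < b i)
    (hbound : ∀ q, l + 1 ≤ q → q ≤ 0 → b q * (∑ i ∈ Finset.Icc (l+1) q, (b i)⁻¹) ≤ K) :
    ∀ k, l + 1 ≤ k → k ≤ 0 → b k ≤ K * (K/(K+1)) ^ ((k - (l+1)).toNat) * b (l+1) := by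
  have hKpos : (0:ℝ) < K := by linarith
  have hK1 : (0:ℝ) < K - 1 := by linarith
  set σ : ℤ → ℝ := fun j => ∑ i ∈ Finset.Icc (l+1) j, (b i)⁻¹ with hσ
  have hσpos : ∀ j, l + 1 ≤ j → 0 < σ j := by
    intro j hj
    apply Finset.sum_pos
    · intro i _
      exact inv_pos.mpr (hb i)
    · exact ⟨l+1, by simp only [Finset.mem_Icc]; omega⟩
  have hlow : ∀ n : ℕ, l + 1 + n ≤ 0 → (K/(K-1)) ^ n / b (l+1) ≤ σ (l + 1 + n) := by
    intro n
    induction n with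
    | zero =>
        intro _
        have hσl : σ (l+1) = (b (l+1))⁻¹ := by
          show (∑ i ∈ Finset.Icc (l+1) (l+1), (b i)⁻¹) = (b (l+1))⁻¹
          rw [Finset.Icc_self, Finset.sum_singleton]
        rw [show l + 1 + ((0:ℕ):ℤ) = l + 1 from by simp, hσl, pow_zero, one_div]
    | succ n ih =>
        intro hn
        have ih' := ih (by omega)
        have hidx : l + 1 + (((n+1):ℕ):ℤ) = l + 1 + n + 1 := by push_cast; ring
        have hsplit : σ (l + 1 + n + 1) = σ (l + 1 + n) + (b (l + 1 + n + 1))⁻¹ := by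
          show (∑ i ∈ Finset.Icc (l+1) (l + 1 + (n:ℤ) + 1), (b i)⁻¹) = _
          rw [Icc_top_split _ (show l + 1 ≤ l + 1 + (n:ℤ) + 1 from by omega)]
          rw [show l + 1 + (n:ℤ) + 1 - 1 = l + 1 + n from by ring]
        have hq' : b (l + 1 + n + 1) * σ (l + 1 + n + 1) ≤ K :=
          hbound (l + 1 + n + 1) (by omega) (by omega)
        have hpb := hb (l + 1 + n + 1)
        have h2 : (b (l+1+n+1))⁻¹ * (b (l+1+n+1)) = 1 := inv_mul_cancel₀ (ne_of_gt hpb)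
        have hinv : σ (l + 1 + n + 1) / K ≤ (b (l + 1 + n + 1))⁻¹ := by
          have h3 := mul_le_mul_of_nonneg_left hq' (le_of_lt (inv_pos.mpr hpb))
          rw [← mul_assoc, h2, one_mul] at h3
          rw [div_le_iff₀ hKpos]
          linarith [h3]
        have h6 : σ (l + 1 + n) ≤ σ (l+1+n+1) * ((K-1)/K) := by
          have h7 : σ (l+1+n+1) * ((K-1)/K) = σ (l+1+n+1) - σ (l+1+n+1)/K := by
            field_simp
          rw [h7]
          linarith [hinv, hsplit.le]
        have hrec : (K/(K-1)) * σ (l + 1 + n) ≤ σ (l + 1 + n + 1) := by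
          calc (K/(K-1)) * σ (l+1+n) ≤ (K/(K-1)) * (σ (l+1+n+1) * ((K-1)/K)) :=
                mul_le_mul_of_nonneg_left h6 (by positivity)
            _ = σ (l+1+n+1) := by
                field_simp
        rw [hidx]
        calc (K/(K-1)) ^ (n+1) / b (l+1) = (K/(K-1)) * ((K/(K-1)) ^ n / b (l+1)) := by ring
          _ ≤ (K/(K-1)) * σ (l + 1 + n) := mul_le_mul_of_nonneg_left ih' (by positivity)
          _ ≤ σ (l + 1 + n + 1) := hrec
  intro k hk hk0
  set n : ℕ := (k - (l+1)).toNat with hn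
  have hkn : l + 1 + (n:ℤ) = k := by omega
  have hlo := hlow n (by omega)
  rw [hkn] at hlo
  have hσk : 0 < σ k := hσpos k hk
  have hbk : b k * σ k ≤ K := hbound k hk hk0
  have hstep1 : b k ≤ K / σ k := by
    rw [le_div_iff₀ hσk]
    exact hbk
  have hge : (K/(K-1)) ^ n / b (l+1) > 0 :=
    div_pos (pow_pos (by positivity) n) (hb (l+1))
  have hstep2 : K / σ k ≤ K / ((K/(K-1)) ^ n / b (l+1)) :=
    div_le_div_of_nonneg_left (by linarith) hge hlo
  have heq : K / ((K/(K-1)) ^ n / b (l+1)) = K * ((K-1)/K)^n * b (l+1) := by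
    rw [div_pow, div_pow]
    have h1 : K ^ n ≠ 0 := by positivity
    have h2 : (K-1) ^ n ≠ 0 := by positivity
    have h3 : b (l+1) ≠ 0 := ne_of_gt (hb (l+1))
    field_simp
  have hbase : ((K-1)/K) ≤ K/(K+1) := by
    rw [div_le_div_iff₀ hKpos (by linarith)]
    nlinarith
  have hpow : ((K-1)/K)^n ≤ (K/(K+1))^n :=
    pow_le_pow_left₀ (by positivity) hbase n
  calc b k ≤ K / σ k := hstep1
    _ ≤ K * ((K-1)/K)^n * b (l+1) := by rw [← heq]; exact hstep2
    _ ≤ K * (K/(K+1))^n * b (l+1) := by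
        apply mul_le_mul_of_nonneg_right _ (le_of_lt (hb (l+1)))
        exact mul_le_mul_of_nonneg_left hpow (le_of_lt hKpos)
open scoped BoundedContinuousFunction

section Main

variable {m : ℕ} (A : ℤ → (EuclideanSpace ℝ (Fin m) ≃L[ℝ] EuclideanSpace ℝ (Fin m)))

local notation "E" => EuclideanSpace ℝ (Fin m)







lemma phiPos_succ_left (l : ℤ) (n : ℕ) :
    PhiPos A l (n + 1) = (PhiPos A (l + 1) n).comp (A l : E →L[ℝ] E) := by
  induction n generalizing l with
  | zero =>
      show ((A (l + ((0:ℕ):ℤ)) : E →L[ℝ] E)).comp (PhiPos A l 0) = _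
      ext v; simp [PhiPos]
  | succ n ih =>
      show ((A (l + ((n+1:ℕ):ℤ)) : E →L[ℝ] E)).comp (PhiPos A l (n+1)) = _
      rw [ih l]
      have h2 : (PhiPos A (l+1) (n+1)) = ((A ((l+1) + n) : E →L[ℝ] E)).comp (PhiPos A (l+1) n) := rfl
      rw [h2]
      have harg : l + ((n+1:ℕ):ℤ) = (l + 1) + (n : ℕ) := by push_cast; ring
      rw [harg, ContinuousLinearMap.comp_assoc]

lemma phiNeg_succ_left (k : ℤ) (n : ℕ) :
    PhiNeg A k (n + 1) = ((A k).symm : E →L[ℝ] E).comp (PhiNeg A (k + 1) n) := by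
  induction n generalizing k with
  | zero =>
      show (PhiNeg A k 0).comp _ = _
      ext v; simp [PhiNeg]
  | succ n ih =>
      show (PhiNeg A k (n+1)).comp _ = _
      rw [ih k]
      have h2 : (PhiNeg A (k+1) (n+1)) = (PhiNeg A (k+1) n).comp (((A ((k+1) + n)).symm : E →L[ℝ] E)) := rfl
      rw [h2, ← ContinuousLinearMap.comp_assoc]
      have harg : k + ((n+1:ℕ):ℤ) = (k + 1) + (n : ℕ) := by push_cast; ring
      rw [harg]

lemma phi_self (k : ℤ) : Phi A k k = 1 := by
  simp [Phi, PhiPos]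

lemma phi_succ (k l : ℤ) :
    Phi A (k + 1) l = ((A k : E →L[ℝ] E)).comp (Phi A k l) := by
  rcases le_or_gt l k with h | h
  · have h1 : l ≤ k + 1 := by omega
    have e1 : (k + 1 - l).toNat = (k - l).toNat + 1 := by omega
    rw [Phi, Phi, if_pos h1, if_pos h, e1]
    show ((A (l + (((k - l).toNat : ℕ) : ℤ)) : E →L[ℝ] E)).comp (PhiPos A l (k-l).toNat) = _
    have : l + (((k - l).toNat : ℕ) : ℤ) = k := by omega
    rw [this]
  · rcases eq_or_lt_of_le (by omega : k + 1 ≤ l) with h2 | h2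
    · rw [Phi, Phi, if_pos h2.ge, if_neg (by omega)]
      have e1 : (k + 1 - l).toNat = 0 := by omega
      have e2 : (l - k).toNat = 1 := by omega
      rw [e1, e2]
      ext v
      simp [PhiPos, PhiNeg, ← h2]
    · rw [Phi, Phi, if_neg (by omega), if_neg (by omega)]
      have e2 : (l - k).toNat = (l - (k+1)).toNat + 1 := by omega
      rw [e2, phiNeg_succ_left]
      ext v
      simp

lemma phi_pred (k l : ℤ) :
    Phi A (k - 1) l = (((A (k - 1)).symm : E →L[ℝ] E)).comp (Phi A k l) := by
  have h := phi_succ A (k - 1) l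
  rw [show k - 1 + 1 = k from by ring] at h
  rw [h]
  ext v
  simp

lemma phi_comp (k l j : ℤ) :
    (Phi A k l).comp (Phi A l j) = Phi A k j := by
  have base : (Phi A l l).comp (Phi A l j) = Phi A l j := by
    rw [phi_self]; ext v; simp
  rcases le_or_gt l k with h | h
  · refine Int.le_induction (motive := fun k _ => (Phi A k l).comp (Phi A l j) = Phi A k j) base ?_ k h
    intro i _ ih
    rw [phi_succ A i l, phi_succ A i j, ContinuousLinearMap.comp_assoc, ih]
  · refine Int.le_induction_down (motive := fun k _ => (Phi A k l).comp (Phi A l j) = Phi A k j) base ?_ k h.le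
    intro i _ ih
    rw [phi_pred A i l, phi_pred A i j, ContinuousLinearMap.comp_assoc, ih]

lemma phi_comp_apply (k l j : ℤ) (v : E) :
    Phi A k l (Phi A l j v) = Phi A k j v := by
  have := phi_comp A k l j
  calc Phi A k l (Phi A l j v) = ((Phi A k l).comp (Phi A l j)) v := rfl
    _ = Phi A k j v := by rw [this]

lemma phi_inv_apply (k l : ℤ) (v : E) : Phi A l k (Phi A k l v) = v := by
  rw [phi_comp_apply, phi_self]; rfl

lemma phi_succ_apply (k l : ℤ) (v : E) :
    Phi A (k + 1) l v = A k (Phi A k l v) := by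
  rw [phi_succ]; rfl

lemma phi_injective (k l : ℤ) {v : E} (h : Phi A k l v = 0) : v = 0 := by
  have := phi_inv_apply A k l v
  rw [h] at this
  simpa using this.symm









lemma norm_phi_le {N : ℝ} (hN : 1 ≤ N)
    (hA : ∀ k : ℤ, ‖(A k : E →L[ℝ] E)‖ ≤ N)
    (hAinv : ∀ k : ℤ, ‖((A k).symm : E →L[ℝ] E)‖ ≤ N)
    (k l : ℤ) (n : ℕ) (h : (k - l).toNat + (l - k).toNat ≤ n) :
    ‖Phi A k l‖ ≤ N ^ n := by
  have hN0 : (0:ℝ) ≤ N := by linarith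
  have hpos : ∀ (l' : ℤ) (p : ℕ), ‖PhiPos A l' p‖ ≤ N ^ p := by
    intro l' p
    induction p with
    | zero =>
        show ‖(1 : E →L[ℝ] E)‖ ≤ N ^ 0
        rw [pow_zero]
        exact le_trans ContinuousLinearMap.norm_id_le le_rfl
    | succ p ih =>
        calc ‖PhiPos A l' (p+1)‖ ≤ ‖(A (l' + p) : E →L[ℝ] E)‖ * ‖PhiPos A l' p‖ :=
              ContinuousLinearMap.opNorm_comp_le _ _
          _ ≤ N * N ^ p := by
              apply mul_le_mul (hA _) ih (norm_nonneg _) hN0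
          _ = N ^ (p+1) := by ring
  have hneg : ∀ (k' : ℤ) (p : ℕ), ‖PhiNeg A k' p‖ ≤ N ^ p := by
    intro k' p
    induction p with
    | zero =>
        show ‖(1 : E →L[ℝ] E)‖ ≤ N ^ 0
        rw [pow_zero]
        exact le_trans ContinuousLinearMap.norm_id_le le_rfl
    | succ p ih =>
        calc ‖PhiNeg A k' (p+1)‖ ≤ ‖PhiNeg A k' p‖ * ‖((A (k' + p)).symm : E →L[ℝ] E)‖ :=
              ContinuousLinearMap.opNorm_comp_le _ _
          _ ≤ N ^ p * N := by
              apply mul_le_mul ih (hAinv _) (norm_nonneg _) (by positivity)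
          _ = N ^ (p+1) := by ring
  rw [Phi]
  split_ifs with hle
  · exact le_trans (hpos l _) (pow_le_pow_right₀ hN (by omega))
  · exact le_trans (hneg k _) (pow_le_pow_right₀ hN (by omega))

lemma sol_forward {v : ℤ → E} {l : ℤ}
    (h : ∀ k, l ≤ k → v (k + 1) = A k (v k)) :
    ∀ k, l ≤ k → v k = Phi A k l (v l) := by
  intro k hk
  refine Int.le_induction (motive := fun k _ => v k = Phi A k l (v l)) ?_ ?_ k hk
  · show v l = Phi A l l (v l)
    rw [phi_self]; rfl
  · intro i hi ih
    rw [h i hi, ih, phi_succ_apply]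

lemma sol_backward {v : ℤ → E} {l : ℤ}
    (h : ∀ k, k ≤ l - 1 → v (k + 1) = A k (v k)) :
    ∀ k, k ≤ l → v k = Phi A k l (v l) := by
  intro k hk
  refine Int.le_induction_down (motive := fun k _ => v k = Phi A k l (v l)) ?_ ?_ k hk
  · show v l = Phi A l l (v l)
    rw [phi_self]; rfl
  · intro i hi ih
    have h1 : v (i - 1 + 1) = A (i - 1) (v (i - 1)) := h (i - 1) (by omega)
    rw [show i - 1 + 1 = i from by ring] at h1
    have : v (i-1) = (A (i-1)).symm (v i) := by
      rw [h1]; simp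
    rw [this, ih, phi_pred]
    rfl

/-- Vectors with bounded backward orbit. -/
def NegBdd : Submodule ℝ E where
  carrier := {ξ | ∃ C, ∀ k : ℤ, k ≤ 0 → ‖Phi A k 0 ξ‖ ≤ C}
  zero_mem' := ⟨0, fun k _ => by simp⟩
  add_mem' := by
    rintro a b ⟨Ca, ha⟩ ⟨Cb, hb⟩
    exact ⟨Ca + Cb, fun k hk => by
      rw [map_add]
      exact le_trans (norm_add_le _ _) (add_le_add (ha k hk) (hb k hk))⟩
  smul_mem' := by
    rintro c a ⟨Ca, ha⟩
    exact ⟨‖c‖ * Ca, fun k hk => by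
      rw [map_smul, norm_smul]
      exact mul_le_mul_of_nonneg_left (ha k hk) (norm_nonneg _)⟩

/-- Vectors with bounded forward orbit. -/
def PosBdd : Submodule ℝ E where
  carrier := {ξ | ∃ C, ∀ k : ℤ, 0 ≤ k → ‖Phi A k 0 ξ‖ ≤ C}
  zero_mem' := ⟨0, fun k _ => by simp⟩
  add_mem' := by
    rintro a b ⟨Ca, ha⟩ ⟨Cb, hb⟩
    exact ⟨Ca + Cb, fun k hk => by
      rw [map_add]
      exact le_trans (norm_add_le _ _) (add_le_add (ha k hk) (hb k hk))⟩
  smul_mem' := by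
    rintro c a ⟨Ca, ha⟩
    exact ⟨‖c‖ * Ca, fun k hk => by
      rw [map_smul, norm_smul]
      exact mul_le_mul_of_nonneg_left (ha k hk) (norm_nonneg _)⟩

/-- Package a bounded function as a bounded continuous function. -/
noncomputable def mkB (f : ℤ → E) (C : ℝ) (h : ∀ k, ‖f k‖ ≤ C) : ℤ →ᵇ E :=
  BoundedContinuousFunction.ofNormedAddCommGroup f continuous_of_discreteTopology C h

@[simp] lemma mkB_apply (f : ℤ → E) (C : ℝ) (h : ∀ k, ‖f k‖ ≤ C) (k : ℤ) :
    mkB f C h k = f k := rfl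

lemma norm_mkB_le (f : ℤ → E) (C : ℝ) (h : ∀ k, ‖f k‖ ≤ C) (hC : 0 ≤ C) :
    ‖mkB f C h‖ ≤ C :=
  (BoundedContinuousFunction.norm_le hC).2 h

/-- The operator `(Tv)_k = v_{k+1} - A_k v_k` on `ℓ∞(ℤ, E)`. -/
noncomputable def Tsh {N : ℝ} (hN : 1 ≤ N)
    (hA : ∀ k : ℤ, ‖(A k : E →L[ℝ] E)‖ ≤ N) : (ℤ →ᵇ E) →L[ℝ] (ℤ →ᵇ E) := by
  have hb : ∀ (v : ℤ →ᵇ E) (k : ℤ), ‖v (k+1) - A k (v k)‖ ≤ (1 + N) * ‖v‖ := by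
    intro v k
    calc ‖v (k+1) - A k (v k)‖ ≤ ‖v (k+1)‖ + ‖A k (v k)‖ := norm_sub_le _ _
      _ ≤ ‖v‖ + N * ‖v‖ := by
          refine add_le_add (BoundedContinuousFunction.norm_coe_le_norm v _) ?_
          calc ‖A k (v k)‖ ≤ ‖(A k : E →L[ℝ] E)‖ * ‖v k‖ := (A k : E →L[ℝ] E).le_opNorm _
            _ ≤ N * ‖v‖ := mul_le_mul (hA k) (BoundedContinuousFunction.norm_coe_le_norm v _)
                (norm_nonneg _) (by linarith)
      _ = (1 + N) * ‖v‖ := by ring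
  refine LinearMap.mkContinuous
    { toFun := fun v => mkB (fun k => v (k+1) - A k (v k)) ((1 + N) * ‖v‖) (hb v)
      map_add' := ?_
      map_smul' := ?_ } (1 + N) ?_
  · intro v w
    ext k
    simp [mkB]
    abel
  · intro c v
    ext k
    simp [mkB]
    ring
  · intro v
    exact norm_mkB_le _ _ (hb v) (by positivity)



@[simp] lemma Tsh_apply {N : ℝ} (hN : 1 ≤ N)
    (hA : ∀ k : ℤ, ‖(A k : E →L[ℝ] E)‖ ≤ N) (v : ℤ →ᵇ E) (k : ℤ) :
    Tsh A hN hA v k = v (k+1) - A k (v k) := rfl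

lemma Tsh_surjective {N : ℝ} (hN : 1 ≤ N)
    (hA : ∀ k : ℤ, ‖(A k : E →L[ℝ] E)‖ ≤ N)
    (hsolv : ∀ w : ℤ → E, (∃ C : ℝ, ∀ k : ℤ, ‖w k‖ ≤ C) →
      ∃ v : ℤ → E, (∃ C : ℝ, ∀ k : ℤ, ‖v k‖ ≤ C) ∧
        ∀ k : ℤ, v (k + 1) = A k (v k) + w k) :
    Function.Surjective (Tsh A hN hA) := by
  intro w
  obtain ⟨v, ⟨C, hC⟩, heq⟩ := hsolv (fun k => w k)
    ⟨‖w‖, fun k => BoundedContinuousFunction.norm_coe_le_norm w k⟩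
  refine ⟨mkB v C hC, ?_⟩
  refine BoundedContinuousFunction.ext fun k => ?_
  show v (k+1) - A k (v k) = w k
  have h1 : v (k + 1) = A k (v k) + w k := heq k
  rw [h1]; abel

lemma ker_orbit {N : ℝ} (hN : 1 ≤ N)
    (hA : ∀ k : ℤ, ‖(A k : E →L[ℝ] E)‖ ≤ N)
    (v : ℤ →ᵇ E) (hv : Tsh A hN hA v = 0) (k : ℤ) :
    v k = Phi A k 0 (v 0) := by
  have heq : ∀ k : ℤ, v (k+1) = A k (v k) := by
    intro k
    have h1 : Tsh A hN hA v k = 0 := by rw [hv]; rfl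
    have h2 : v (k+1) - A k (v k) = 0 := h1
    exact sub_eq_zero.mp h2
  rcases le_or_gt 0 k with h | h
  · exact sol_forward A (fun k _ => heq k) k h
  · exact sol_backward A (fun k _ => heq k) k h.le

lemma posBdd_sup_negBdd {N : ℝ} (hN : 1 ≤ N)
    (hA : ∀ k : ℤ, ‖(A k : E →L[ℝ] E)‖ ≤ N)
    (hsolv : ∀ w : ℤ → E, (∃ C : ℝ, ∀ k : ℤ, ‖w k‖ ≤ C) →
      ∃ v : ℤ → E, (∃ C : ℝ, ∀ k : ℤ, ‖v k‖ ≤ C) ∧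
        ∀ k : ℤ, v (k + 1) = A k (v k) + w k) (ξ : E) :
    ξ ∈ PosBdd A ⊔ NegBdd A := by
  obtain ⟨v, ⟨C, hC⟩, heq⟩ := hsolv (fun k => if k = -1 then ξ else 0)
    ⟨‖ξ‖, fun k => by by_cases h : k = -1 <;> simp [h]⟩
  have heq' : ∀ k : ℤ, v (k + 1) = A k (v k) + (if k = -1 then ξ else 0) :=
    fun k => heq k
  have hfwd : ∀ k : ℤ, 0 ≤ k → v (k+1) = A k (v k) := by
    intro k hk
    have h1 := heq' k
    rw [if_neg (show ¬ (k = -1) by omega), add_zero] at h1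
    exact h1
  have hfv : ∀ k, 0 ≤ k → v k = Phi A k 0 (v 0) := sol_forward A hfwd
  have hbwd : ∀ k : ℤ, k ≤ -1 - 1 → v (k+1) = A k (v k) := by
    intro k hk
    have h1 := heq' k
    rw [if_neg (show ¬ (k = -1) by omega), add_zero] at h1
    exact h1
  have hbv : ∀ k, k ≤ -1 → v k = Phi A k (-1) (v (-1)) := sol_backward A hbwd
  have hζmem : v 0 - ξ ∈ NegBdd A := by
    have hv0 : v 0 = A (-1) (v (-1)) + ξ := by
      have h1 := heq' (-1)
      rw [if_pos rfl] at h1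
      simpa using h1
    have hζeq : v 0 - ξ = Phi A 0 (-1) (v (-1)) := by
      rw [hv0]
      have h2 : Phi A 0 (-1) (v (-1)) = A (-1) (Phi A (-1) (-1) (v (-1))) := by
        have h3 := phi_succ_apply A (-1) (-1) (v (-1))
        rw [show (-1:ℤ) + 1 = 0 from by ring] at h3
        exact h3
      rw [h2, phi_self]
      simp
    refine ⟨max C ‖v 0 - ξ‖, fun k hk => ?_⟩
    rcases lt_or_eq_of_le hk with h | h
    · have h4 : Phi A k 0 (v 0 - ξ) = v k := by
        rw [hζeq, phi_comp_apply]
        exact (hbv k (by omega)).symm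
      rw [h4]
      exact le_max_of_le_left (hC k)
    · rw [h, phi_self]
      exact le_max_of_le_right le_rfl
  have hv0mem : v 0 ∈ PosBdd A := by
    refine ⟨C, fun k hk => ?_⟩
    rw [← hfv k hk]
    exact hC k
  rw [Submodule.mem_sup]
  exact ⟨v 0, hv0mem, -(v 0 - ξ), neg_mem hζmem, by abel⟩

set_option synthInstance.maxHeartbeats 1000000 in
set_option maxHeartbeats 1000000 in
lemma key_bound {N : ℝ} (hN : 1 ≤ N)
    (hA : ∀ k : ℤ, ‖(A k : E →L[ℝ] E)‖ ≤ N)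
    (hsolv : ∀ w : ℤ → E, (∃ C : ℝ, ∀ k : ℤ, ‖w k‖ ≤ C) →
      ∃ v : ℤ → E, (∃ C : ℝ, ∀ k : ℤ, ‖v k‖ ≤ C) ∧
        ∀ k : ℤ, v (k + 1) = A k (v k) + w k)
    (V' : Submodule ℝ E) (hcompl : IsCompl (PosBdd A ⊓ NegBdd A) V') :
    ∃ K : ℝ, 2 ≤ K ∧
      (∀ u : ℤ →ᵇ E, u 0 ∈ V' → ‖u‖ ≤ K * ‖Tsh A hN hA u‖) ∧
      (∀ w : ℤ →ᵇ E, ∃ v : ℤ →ᵇ E, Tsh A hN hA v = w ∧ v 0 ∈ V' ∧ ‖v‖ ≤ K * ‖w‖) := by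
  classical
  set ev₀ : (ℤ →ᵇ E) →L[ℝ] E := BoundedContinuousFunction.evalCLM ℝ (0 : ℤ) with hev
  set Z : Submodule ℝ (ℤ →ᵇ E) := V'.comap (ev₀ : (ℤ →ᵇ E) →ₗ[ℝ] E) with hZ
  have hmemZ : ∀ u : ℤ →ᵇ E, u ∈ Z ↔ u 0 ∈ V' := by
    intro u; rfl
  have hZc : IsClosed (Z : Set (ℤ →ᵇ E)) :=
    (V'.closed_of_finiteDimensional).preimage ev₀.continuous
  haveI : CompleteSpace Z := hZc.completeSpace_coe
  set T₀ : Z →L[ℝ] (ℤ →ᵇ E) := (Tsh A hN hA).comp Z.subtypeL with hT₀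
  -- membership of full-orbit-bounded vectors produces kernel elements
  have horbit : ∀ a : E, a ∈ PosBdd A ⊓ NegBdd A →
      ∃ z : ℤ →ᵇ E, (∀ k : ℤ, z k = Phi A k 0 a) ∧ Tsh A hN hA z = 0 := by
    rintro a ⟨⟨Cp, hCp⟩, ⟨Cn, hCn⟩⟩
    have hb : ∀ k : ℤ, ‖Phi A k 0 a‖ ≤ max Cp Cn := by
      intro k
      rcases le_or_gt 0 k with h | h
      · exact le_max_of_le_left (hCp k h)
      · exact le_max_of_le_right (hCn k h.le)
    refine ⟨mkB (fun k => Phi A k 0 a) (max Cp Cn) hb, fun k => rfl, ?_⟩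
    refine BoundedContinuousFunction.ext fun k => ?_
    show Phi A (k+1) 0 a - A k (Phi A k 0 a) = 0
    rw [phi_succ_apply]
    simp
  -- injectivity of T on Z
  have hinj : ∀ u : ℤ →ᵇ E, u 0 ∈ V' → Tsh A hN hA u = 0 → u = 0 := by
    intro u hu0 hu
    have horb := ker_orbit A hN hA u hu
    have hu0V : u 0 ∈ PosBdd A ⊓ NegBdd A := by
      constructor
      · exact ⟨‖u‖, fun k _ => by
          rw [← horb k]; exact BoundedContinuousFunction.norm_coe_le_norm u k⟩
      · exact ⟨‖u‖, fun k _ => by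
          rw [← horb k]; exact BoundedContinuousFunction.norm_coe_le_norm u k⟩
    have h0 : u 0 = 0 := by
      have hd := hcompl.disjoint
      rw [Submodule.disjoint_def] at hd
      exact hd _ hu0V hu0
    refine BoundedContinuousFunction.ext fun k => ?_
    rw [horb k, h0]
    simp
  -- surjectivity of T₀
  have hsurj : Function.Surjective T₀ := by
    intro w
    obtain ⟨v, hv⟩ := Tsh_surjective A hN hA hsolv w
    have hsup : v 0 ∈ (PosBdd A ⊓ NegBdd A) ⊔ V' := by
      rw [hcompl.sup_eq_top]; trivial
    obtain ⟨a, ha, b, hb, hab⟩ := Submodule.mem_sup.mp hsup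
    obtain ⟨z, hzk, hz0⟩ := horbit a ha
    have huZ : v - z ∈ Z := by
      rw [hmemZ]
      show v 0 - z 0 ∈ V'
      rw [hzk 0, phi_self]
      show v 0 - a ∈ V'
      have : v 0 - a = b := by rw [← hab]; abel
      rw [this]; exact hb
    refine ⟨⟨v - z, huZ⟩, ?_⟩
    show Tsh A hN hA (v - z) = w
    rw [map_sub, hv, hz0, sub_zero]
  obtain ⟨C, hCpos, hC⟩ := @ContinuousLinearMap.exists_preimage_norm_le ℝ ℝ _ _ (RingHom.id ℝ) Z _ _ (ℤ →ᵇ E) _ _ T₀ _ _ _ _ _ _ hsurj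
  refine ⟨max C 2, le_max_right _ _, ?_, ?_⟩
  · intro u hu0
    obtain ⟨z, hz, hznorm⟩ := hC (Tsh A hN hA u)
    have huz : u = (z : ℤ →ᵇ E) := by
      have hz0 : Tsh A hN hA (u - z) = 0 := by
        rw [map_sub]
        have : Tsh A hN hA (z : ℤ →ᵇ E) = Tsh A hN hA u := hz
        rw [this, sub_self]
      have hmem : (u - (z : ℤ →ᵇ E)) 0 ∈ V' := by
        show u 0 - (z : ℤ →ᵇ E) 0 ∈ V'
        exact sub_mem hu0 ((hmemZ _).mp z.2)
      have := hinj _ hmem hz0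
      have : u - (z : ℤ →ᵇ E) = 0 := this
      linear_combination (norm := abel) this
    calc ‖u‖ = ‖z‖ := by rw [huz]; rfl
      _ ≤ C * ‖Tsh A hN hA u‖ := hznorm
      _ ≤ max C 2 * ‖Tsh A hN hA u‖ :=
          mul_le_mul_of_nonneg_right (le_max_left _ _) (norm_nonneg _)
  · intro w
    obtain ⟨z, hz, hznorm⟩ := hC w
    refine ⟨(z : ℤ →ᵇ E), hz, (hmemZ _).mp z.2, ?_⟩
    calc ‖(z : ℤ →ᵇ E)‖ = ‖z‖ := rfl
      _ ≤ C * ‖w‖ := hznorm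
      _ ≤ max C 2 * ‖w‖ := mul_le_mul_of_nonneg_right (le_max_left _ _) (norm_nonneg _)



set_option maxHeartbeats 1000000 in
/-- Abstract test-sequence bound: if `x` is an orbit, `c` a scalar function such that
`c • x` is bounded, has increments of norm at most 1 under `T`, and starts in `V'`,
then `c • x` is bounded by `K`. -/
lemma test_bound {N : ℝ} (hN : 1 ≤ N)
    (hA : ∀ k : ℤ, ‖(A k : E →L[ℝ] E)‖ ≤ N)
    (V' : Submodule ℝ E) (K : ℝ) (hK : 2 ≤ K)
    (key : ∀ u : ℤ →ᵇ E, u 0 ∈ V' → ‖u‖ ≤ K * ‖Tsh A hN hA u‖)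
    (x : ℤ → E) (hx : ∀ j : ℤ, x (j+1) = A j (x j))
    (c : ℤ → ℝ) (Cb : ℝ) (hub : ∀ j : ℤ, ‖c j • x j‖ ≤ Cb)
    (hdiff : ∀ j : ℤ, ‖(c (j+1) - c j) • x (j+1)‖ ≤ 1)
    (hc0 : c 0 • x 0 ∈ V') :
    ∀ j : ℤ, ‖c j • x j‖ ≤ K := by
  intro j
  have huapp : ∀ i : ℤ, (mkB (fun j => c j • x j) Cb hub) i = c i • x i := fun i => rfl
  have hTj : ∀ i : ℤ, Tsh A hN hA (mkB (fun j => c j • x j) Cb hub) i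
      = (c (i+1) - c i) • x (i+1) := by
    intro i
    rw [Tsh_apply, huapp, huapp, map_smul, ← hx i, sub_smul]
  have hTnorm : ‖Tsh A hN hA (mkB (fun j => c j • x j) Cb hub)‖ ≤ 1 := by
    rw [BoundedContinuousFunction.norm_le zero_le_one]
    intro i
    rw [hTj i]
    exact hdiff i
  have hKey := key _ ((huapp 0) ▸ hc0)
  calc ‖c j • x j‖ = ‖(mkB (fun j => c j • x j) Cb hub) j‖ := by rw [huapp]
    _ ≤ ‖mkB (fun j => c j • x j) Cb hub‖ :=
        BoundedContinuousFunction.norm_coe_le_norm _ j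
    _ ≤ K * ‖Tsh A hN hA (mkB (fun j => c j • x j) Cb hub)‖ := hKey
    _ ≤ K * 1 := mul_le_mul_of_nonneg_left hTnorm (by linarith)
    _ = K := mul_one K

lemma unstable_core {N : ℝ} (hN : 1 ≤ N)
    (hA : ∀ k : ℤ, ‖(A k : E →L[ℝ] E)‖ ≤ N)
    (V' : Submodule ℝ E) (K : ℝ) (hK : 2 ≤ K)
    (key : ∀ u : ℤ →ᵇ E, u 0 ∈ V' → ‖u‖ ≤ K * ‖Tsh A hN hA u‖)
    (ξ : E) (hξ : ξ ∈ NegBdd A) (hξ0 : ξ ≠ 0) (l : ℤ) (hl : l ≤ 0)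
    (j0 : ℤ) (hj0 : j0 ≤ l - 1) :
    ‖Phi A j0 0 ξ‖ * (∑ i ∈ Finset.Icc (j0+1) l, ‖Phi A i 0 ξ‖⁻¹) ≤ K := by
  classical
  obtain ⟨M, hM⟩ := hξ
  have ha : ∀ i, (0:ℝ) < ‖Phi A i 0 ξ‖ := by
    intro i
    rw [norm_pos_iff]
    intro hc
    exact hξ0 (phi_injective A i 0 hc)
  have hMpos : 0 ≤ M := le_trans (norm_nonneg _) (hM 0 le_rfl)
  set g : ℤ → ℝ := fun j => ∑ i ∈ Finset.Icc (max j j0 + 1) l, ‖Phi A i 0 ξ‖⁻¹ with hgf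
  have hg_nonneg : ∀ j : ℤ, 0 ≤ g j := by
    intro j
    apply Finset.sum_nonneg
    intro i _
    exact le_of_lt (inv_pos.mpr (ha i))
  have hg_le : ∀ j : ℤ, g j ≤ ∑ i ∈ Finset.Icc (j0 + 1) l, ‖Phi A i 0 ξ‖⁻¹ := by
    intro j
    have hsub : Finset.Icc (max j j0 + 1) l ⊆ Finset.Icc (j0 + 1) l := by
      intro i hi
      simp only [Finset.mem_Icc] at *
      omega
    exact Finset.sum_le_sum_of_subset_of_nonneg hsub
      (fun i _ _ => le_of_lt (inv_pos.mpr (ha i)))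
  have hg_zero : ∀ j : ℤ, l ≤ j → g j = 0 := by
    intro j hj
    show (∑ i ∈ Finset.Icc (max j j0 + 1) l, ‖Phi A i 0 ξ‖⁻¹) = 0
    rw [Finset.Icc_eq_empty (by omega), Finset.sum_empty]
  have hg_diff : ∀ j : ℤ, j0 ≤ j → j ≤ l - 1 →
      g j = ‖Phi A (j+1) 0 ξ‖⁻¹ + g (j+1) := by
    intro j h1 h2
    show (∑ i ∈ Finset.Icc (max j j0 + 1) l, ‖Phi A i 0 ξ‖⁻¹)
      = ‖Phi A (j+1) 0 ξ‖⁻¹ + ∑ i ∈ Finset.Icc (max (j+1) j0 + 1) l, ‖Phi A i 0 ξ‖⁻¹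
    rw [show max j j0 = j from by omega]
    rw [Icc_bot_split _ (show j + 1 ≤ l from by omega)]
    rw [show ((j:ℤ) + 1 + 1) = max (j+1) j0 + 1 from by omega]
  have hg_const : ∀ j : ℤ, j ≤ j0 - 1 → g j = g (j+1) := by
    intro j hj
    show (∑ i ∈ Finset.Icc (max j j0 + 1) l, ‖Phi A i 0 ξ‖⁻¹)
      = ∑ i ∈ Finset.Icc (max (j+1) j0 + 1) l, ‖Phi A i 0 ξ‖⁻¹
    rw [show max j j0 = j0 from by omega, show max (j+1) j0 = j0 from by omega]
  have hmain := test_bound A hN hA V' K hK key (fun j => Phi A j 0 ξ)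
    (fun j => (phi_succ_apply A j 0 ξ))
    (fun j => -(g j))
    ((∑ i ∈ Finset.Icc (j0 + 1) l, ‖Phi A i 0 ξ‖⁻¹) * M)
    (by
      intro j
      show ‖(-(g j)) • Phi A j 0 ξ‖ ≤ _
      rw [norm_smul, norm_neg, Real.norm_eq_abs, abs_of_nonneg (hg_nonneg j)]
      rcases le_or_gt j l with h | h
      · exact mul_le_mul (hg_le j) (hM j (by omega)) (norm_nonneg _)
          (Finset.sum_nonneg (fun i _ => le_of_lt (inv_pos.mpr (ha i))))
      · rw [hg_zero j h.le, zero_mul]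
        exact mul_nonneg (Finset.sum_nonneg
          (fun i _ => le_of_lt (inv_pos.mpr (ha i)))) hMpos)
    (by
      intro j
      show ‖(-(g (j+1)) - -(g j)) • Phi A (j+1) 0 ξ‖ ≤ 1
      rw [norm_smul, Real.norm_eq_abs, show -(g (j+1)) - -(g j) = g j - g (j+1) from by ring]
      rcases le_or_gt l j with h | h
      · rw [hg_zero j h, hg_zero (j+1) (by omega)]
        simp
      · rcases le_or_gt j0 j with h2 | h2
        · rw [hg_diff j h2 (by omega)]
          rw [show ‖Phi A (j+1) 0 ξ‖⁻¹ + g (j+1) - g (j+1) = ‖Phi A (j+1) 0 ξ‖⁻¹ from by ring]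
          rw [abs_of_nonneg (le_of_lt (inv_pos.mpr (ha (j+1))))]
          rw [inv_mul_cancel₀ (ne_of_gt (ha (j+1)))]
        · rw [hg_const j (by omega), sub_self]
          simp)
    (by
      show (-(g 0)) • Phi A 0 0 ξ ∈ V'
      rw [hg_zero 0 hl]
      simp only [neg_zero, zero_smul]
      exact zero_mem V')
  have hval := hmain j0
  have h2 : ‖(-(g j0)) • Phi A j0 0 ξ‖ = ‖Phi A j0 0 ξ‖ * g j0 := by
    rw [norm_smul, norm_neg, Real.norm_eq_abs, abs_of_nonneg (hg_nonneg j0)]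
    ring
  have h3 : g j0 = ∑ i ∈ Finset.Icc (j0+1) l, ‖Phi A i 0 ξ‖⁻¹ := by
    rw [hgf]
    simp only []
    rw [max_self]
  rw [← h3]
  rw [← h2]
  exact hval

lemma unstable_estimate {N : ℝ} (hN : 1 ≤ N)
    (hA : ∀ k : ℤ, ‖(A k : E →L[ℝ] E)‖ ≤ N)
    (V' : Submodule ℝ E) (K : ℝ) (hK : 2 ≤ K)
    (key : ∀ u : ℤ →ᵇ E, u 0 ∈ V' → ‖u‖ ≤ K * ‖Tsh A hN hA u‖)
    (ξ : E) (hξ : ξ ∈ NegBdd A) (l : ℤ) (hl : l ≤ 0) (j : ℤ) (hj : j ≤ l) :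
    ‖Phi A j 0 ξ‖ ≤ (K+1) * (K/(K+1)) ^ (l-j).toNat * ‖Phi A l 0 ξ‖ := by
  by_cases hξ0 : ξ = 0
  · subst hξ0
    simp only [map_zero, norm_zero, mul_zero]
    exact le_rfl
  · exact gronwall_back K hK (fun i => ‖Phi A i 0 ξ‖) l
      (fun i => by
        rw [norm_pos_iff]
        intro hc
        exact hξ0 (phi_injective A i 0 hc))
      (fun j0 hj0 => unstable_core A hN hA V' K hK key ξ hξ hξ0 l hl j0 hj0) j hj

set_option maxHeartbeats 1000000 in
lemma stable_core {N : ℝ} (hN : 1 ≤ N)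
    (hA : ∀ k : ℤ, ‖(A k : E →L[ℝ] E)‖ ≤ N)
    (hAinv : ∀ k : ℤ, ‖((A k).symm : E →L[ℝ] E)‖ ≤ N)
    (V' : Submodule ℝ E) (K : ℝ) (hK : 2 ≤ K)
    (key : ∀ u : ℤ →ᵇ E, u 0 ∈ V' → ‖u‖ ≤ K * ‖Tsh A hN hA u‖)
    (η : E) (hη : η ∈ PosBdd A) (hηV' : η ∈ V') (hη0 : η ≠ 0)
    (l : ℤ) (q : ℤ) (hlq : l + 1 ≤ q) (hq0 : q ≤ 0) :
    ‖Phi A q 0 η‖ * (∑ i ∈ Finset.Icc (l+1) q, ‖Phi A i 0 η‖⁻¹) ≤ K := by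
  classical
  obtain ⟨Mp, hMp⟩ := hη
  have hb : ∀ i, (0:ℝ) < ‖Phi A i 0 η‖ := by
    intro i
    rw [norm_pos_iff]
    intro hc
    exact hη0 (phi_injective A i 0 hc)
  have hMp0 : 0 ≤ Mp := le_trans (norm_nonneg _) (hMp 0 le_rfl)
  -- uniform bound on the orbit for j ≥ l
  have hB : ∀ j : ℤ, l ≤ j → ‖Phi A j 0 η‖ ≤ max (N ^ ((-l).toNat) * ‖η‖) Mp := by
    intro j hj
    rcases le_or_gt 0 j with h | h
    · exact le_max_of_le_right (hMp j h)
    · refine le_max_of_le_left ?_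
      calc ‖Phi A j 0 η‖ ≤ ‖Phi A j 0‖ * ‖η‖ := (Phi A j 0).le_opNorm η
        _ ≤ N ^ ((-l).toNat) * ‖η‖ := by
            apply mul_le_mul_of_nonneg_right _ (norm_nonneg η)
            exact norm_phi_le A hN hA hAinv j 0 _ (by omega)
  set B : ℝ := max (N ^ ((-l).toNat) * ‖η‖) Mp with hBf
  have hB0 : 0 ≤ B := le_max_of_le_right hMp0
  set s : ℤ → ℝ := fun j => ∑ i ∈ Finset.Icc (l+1) (min j q), ‖Phi A i 0 η‖⁻¹ with hsf
  have hs_nonneg : ∀ j, 0 ≤ s j :=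
    fun j => Finset.sum_nonneg (fun i _ => le_of_lt (inv_pos.mpr (hb i)))
  have hs_zero : ∀ j : ℤ, j ≤ l → s j = 0 := by
    intro j hj
    show (∑ i ∈ Finset.Icc (l+1) (min j q), ‖Phi A i 0 η‖⁻¹) = 0
    rw [Finset.Icc_eq_empty (by omega), Finset.sum_empty]
  have hs_le : ∀ j : ℤ, s j ≤ ∑ i ∈ Finset.Icc (l+1) q, ‖Phi A i 0 η‖⁻¹ := by
    intro j
    apply Finset.sum_le_sum_of_subset_of_nonneg
    · intro i hi
      simp only [Finset.mem_Icc] at *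
      omega
    · exact fun i _ _ => le_of_lt (inv_pos.mpr (hb i))
  have hs_q : s q = ∑ i ∈ Finset.Icc (l+1) q, ‖Phi A i 0 η‖⁻¹ := by
    show (∑ i ∈ Finset.Icc (l+1) (min q q), ‖Phi A i 0 η‖⁻¹) = _
    rw [min_self]
  have hs_diff : ∀ j : ℤ, l ≤ j → j ≤ q - 1 → s (j+1) = s j + ‖Phi A (j+1) 0 η‖⁻¹ := by
    intro j h1 h2
    show (∑ i ∈ Finset.Icc (l+1) (min (j+1) q), ‖Phi A i 0 η‖⁻¹)
      = (∑ i ∈ Finset.Icc (l+1) (min j q), ‖Phi A i 0 η‖⁻¹) + _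
    rw [show min (j+1) q = j + 1 from by omega, show min j q = j from by omega]
    rw [Icc_top_split _ (show l + 1 ≤ j + 1 from by omega)]
    rw [show j + 1 - 1 = j from by ring]
  have hs_const : ∀ j : ℤ, q ≤ j → s j = s (j+1) := by
    intro j hj
    show (∑ i ∈ Finset.Icc (l+1) (min j q), ‖Phi A i 0 η‖⁻¹)
      = ∑ i ∈ Finset.Icc (l+1) (min (j+1) q), ‖Phi A i 0 η‖⁻¹
    rw [show min j q = q from by omega, show min (j+1) q = q from by omega]
  have hSq0 : 0 ≤ ∑ i ∈ Finset.Icc (l+1) q, ‖Phi A i 0 η‖⁻¹ :=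
    Finset.sum_nonneg (fun i _ => le_of_lt (inv_pos.mpr (hb i)))
  have hmain := test_bound A hN hA V' K hK key (fun j => Phi A j 0 η)
    (fun j => (phi_succ_apply A j 0 η))
    s
    ((∑ i ∈ Finset.Icc (l+1) q, ‖Phi A i 0 η‖⁻¹) * B)
    (by
      intro j
      show ‖s j • Phi A j 0 η‖ ≤ _
      rw [norm_smul, Real.norm_eq_abs, abs_of_nonneg (hs_nonneg j)]
      rcases le_or_gt j l with h | h
      · rw [hs_zero j h, zero_mul]
        exact mul_nonneg hSq0 hB0
      · exact mul_le_mul (hs_le j) (hB j h.le) (norm_nonneg _) hSq0)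
    (by
      intro j
      show ‖(s (j+1) - s j) • Phi A (j+1) 0 η‖ ≤ 1
      rw [norm_smul, Real.norm_eq_abs]
      rcases le_or_gt j (l-1) with h | h
      · rw [hs_zero j (by omega), hs_zero (j+1) (by omega), sub_self]
        simp
      · rcases le_or_gt q j with h2 | h2
        · rw [← hs_const j h2, sub_self]
          simp
        · rw [hs_diff j (by omega) (by omega)]
          rw [show s j + ‖Phi A (j+1) 0 η‖⁻¹ - s j = ‖Phi A (j+1) 0 η‖⁻¹ from by ring]
          rw [abs_of_nonneg (le_of_lt (inv_pos.mpr (hb (j+1))))]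
          rw [inv_mul_cancel₀ (ne_of_gt (hb (j+1)))])
    (by
      show s 0 • Phi A 0 0 η ∈ V'
      exact Submodule.smul_mem V' _ (by rw [phi_self]; exact hηV'))
  have hval := hmain q
  have h2 : ‖s q • Phi A q 0 η‖ = ‖Phi A q 0 η‖ * s q := by
    rw [norm_smul, Real.norm_eq_abs, abs_of_nonneg (hs_nonneg q)]
    ring
  rw [h2, hs_q] at hval
  exact hval

lemma stable_estimate {N : ℝ} (hN : 1 ≤ N)
    (hA : ∀ k : ℤ, ‖(A k : E →L[ℝ] E)‖ ≤ N)
    (hAinv : ∀ k : ℤ, ‖((A k).symm : E →L[ℝ] E)‖ ≤ N)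
    (V' : Submodule ℝ E) (K : ℝ) (hK : 2 ≤ K)
    (key : ∀ u : ℤ →ᵇ E, u 0 ∈ V' → ‖u‖ ≤ K * ‖Tsh A hN hA u‖)
    (η : E) (hη : η ∈ PosBdd A) (hηV' : η ∈ V')
    (l k : ℤ) (hlk : l ≤ k) (hk0 : k ≤ 0) :
    ‖Phi A k 0 η‖ ≤ (K+1) * N * (K/(K+1)) ^ (k-l).toNat * ‖Phi A l 0 η‖ := by
  by_cases hη0 : η = 0
  · subst hη0
    simp only [map_zero, norm_zero, mul_zero]
    exact le_rfl
  have hb : ∀ i, (0:ℝ) < ‖Phi A i 0 η‖ := by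
    intro i
    rw [norm_pos_iff]
    intro hc
    exact hη0 (phi_injective A i 0 hc)
  rcases eq_or_lt_of_le hlk with rfl | hlt
  · rw [show (l - l).toNat = 0 from by omega, pow_zero, mul_one]
    have h1 : (1:ℝ) ≤ (K+1)*N := by nlinarith
    calc ‖Phi A l 0 η‖ = 1 * ‖Phi A l 0 η‖ := (one_mul _).symm
      _ ≤ (K+1)*N*‖Phi A l 0 η‖ := mul_le_mul_of_nonneg_right h1 (norm_nonneg _)
  · have hgron := gronwall_fwd K hK (fun i => ‖Phi A i 0 η‖) l hb
      (fun q hq hq0' => stable_core A hN hA hAinv V' K hK key η hη hηV' hη0 l q hq hq0')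
      k (by omega) hk0
    have hbl1 : ‖Phi A (l+1) 0 η‖ ≤ N * ‖Phi A l 0 η‖ := by
      rw [phi_succ_apply A l 0 η]
      calc ‖A l (Phi A l 0 η)‖ ≤ ‖(A l : E →L[ℝ] E)‖ * ‖Phi A l 0 η‖ :=
            (A l : E →L[ℝ] E).le_opNorm _
        _ ≤ N * ‖Phi A l 0 η‖ := mul_le_mul_of_nonneg_right (hA l) (norm_nonneg _)
    have hKpos : (0:ℝ) < K := by linarith
    set n : ℕ := (k - (l+1)).toNat with hn
    have hexp : (k - l).toNat = n + 1 := by omega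
    have hKlam : (K + 1) * (K/(K+1)) = K := by field_simp
    calc ‖Phi A k 0 η‖ ≤ K * (K/(K+1)) ^ n * ‖Phi A (l+1) 0 η‖ := hgron
      _ ≤ K * (K/(K+1)) ^ n * (N * ‖Phi A l 0 η‖) := by
          apply mul_le_mul_of_nonneg_left hbl1
          positivity
      _ = (K+1) * N * ((K/(K+1)) ^ n * (K/(K+1))) * ‖Phi A l 0 η‖ := by
          rw [show (K+1) * N * ((K/(K+1)) ^ n * (K/(K+1))) = ((K+1) * (K/(K+1))) * N * (K/(K+1)) ^ n from by ring]
          rw [hKlam]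
          ring
      _ = (K+1) * N * (K/(K+1)) ^ (k-l).toNat * ‖Phi A l 0 η‖ := by
          rw [hexp, pow_succ]

set_option maxHeartbeats 1000000 in
lemma qproj_bound {N : ℝ} (hN : 1 ≤ N)
    (hA : ∀ k : ℤ, ‖(A k : E →L[ℝ] E)‖ ≤ N)
    (hAinv : ∀ k : ℤ, ‖((A k).symm : E →L[ℝ] E)‖ ≤ N)
    (V' W : Submodule ℝ E) (hXsV' : PosBdd A ⊓ V' = W)
    (Q0 : E →ₗ[ℝ] E) (hQ0W : ∀ x ∈ W, Q0 x = x) (hQ0U : ∀ x ∈ NegBdd A, Q0 x = 0)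
    (K : ℝ) (hK : 2 ≤ K)
    (hex : ∀ w : ℤ →ᵇ E, ∃ v : ℤ →ᵇ E, Tsh A hN hA v = w ∧ v 0 ∈ V' ∧ ‖v‖ ≤ K * ‖w‖)
    (l : ℤ) (hl : l ≤ 0) (ξ : E) :
    ‖Phi A l 0 (Q0 (Phi A 0 l ξ))‖ ≤ K * ‖ξ‖ := by
  classical
  have hwb : ∀ k : ℤ, ‖(if k = l - 1 then ξ else 0 : E)‖ ≤ ‖ξ‖ := by
    intro k
    by_cases h : k = l - 1 <;> simp [h]
  obtain ⟨u, hTu, hu0, hnu⟩ := hex (mkB (fun k => if k = l - 1 then ξ else 0) ‖ξ‖ hwb)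
  have hnu' : ‖u‖ ≤ K * ‖ξ‖ := by
    calc ‖u‖ ≤ K * ‖mkB (fun k => if k = l - 1 then ξ else 0) ‖ξ‖ hwb‖ := hnu
      _ ≤ K * ‖ξ‖ := by
          apply mul_le_mul_of_nonneg_left _ (by linarith)
          exact norm_mkB_le _ _ hwb (norm_nonneg ξ)
  have heq : ∀ k : ℤ, u (k+1) = A k (u k) + (if k = l - 1 then ξ else 0) := by
    intro k
    have h1 : Tsh A hN hA u k
        = (mkB (fun k => if k = l - 1 then ξ else 0) ‖ξ‖ hwb) k := by rw [hTu]
    have h2 : u (k+1) - A k (u k) = (if k = l - 1 then ξ else 0 : E) := h1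
    rw [sub_eq_iff_eq_add] at h2
    rw [h2]
    abel
  have hfwd : ∀ k : ℤ, l ≤ k → u (k+1) = A k (u k) := by
    intro k hk
    have h1 := heq k
    rw [if_neg (show ¬ (k = l - 1) by omega), add_zero] at h1
    exact h1
  have hfu : ∀ k, l ≤ k → u k = Phi A k l (u l) := sol_forward A hfwd
  have hbwd : ∀ k : ℤ, k ≤ (l-1) - 1 → u (k+1) = A k (u k) := by
    intro k hk
    have h1 := heq k
    rw [if_neg (show ¬ (k = l - 1) by omega), add_zero] at h1
    exact h1
  have hbu : ∀ k, k ≤ l - 1 → u k = Phi A k (l-1) (u (l-1)) := sol_backward A hbwd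
  have hul : u l = A (l-1) (u (l-1)) + ξ := by
    have h1 := heq (l-1)
    rw [if_pos rfl, show l - 1 + 1 = l from by ring] at h1
    exact h1
  have hstep : ∀ x : E, Phi A l (l-1) x = A (l-1) x := by
    intro x
    have h3 := phi_succ_apply A (l-1) (l-1) x
    rw [show l - 1 + 1 = l from by ring, phi_self] at h3
    exact h3
  have hη : ∀ k : ℤ, k ≤ l - 1 → Phi A k l (u l - ξ) = u k := by
    intro k hk
    have h4 : u l - ξ = Phi A l (l-1) (u (l-1)) := by
      rw [hstep, hul]; abel
    rw [h4, phi_comp_apply]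
    exact (hbu k hk).symm
  have hu0eq : u 0 = Phi A 0 l (u l) := hfu 0 hl
  have hu0Xs : u 0 ∈ PosBdd A := by
    refine ⟨‖u‖, fun k hk => ?_⟩
    have h5 : Phi A k 0 (u 0) = u k := by
      rw [hu0eq, phi_comp_apply]
      exact (hfu k (by omega)).symm
    rw [h5]
    exact BoundedContinuousFunction.norm_coe_le_norm u k
  have hu0W : u 0 ∈ W := by
    rw [← hXsV']
    exact ⟨hu0Xs, hu0⟩
  have hζU : Phi A 0 l (u l - ξ) ∈ NegBdd A := by
    refine ⟨max ‖u‖ (N ^ ((1-l).toNat) * (‖u‖ + ‖ξ‖)), fun k hk => ?_⟩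
    have h6 : Phi A k 0 (Phi A 0 l (u l - ξ)) = Phi A k l (u l - ξ) := phi_comp_apply _ _ _ _ _
    rw [h6]
    rcases le_or_gt k (l-1) with h | h
    · rw [hη k h]
      exact le_max_of_le_left (BoundedContinuousFunction.norm_coe_le_norm u k)
    · refine le_max_of_le_right ?_
      calc ‖Phi A k l (u l - ξ)‖ ≤ ‖Phi A k l‖ * ‖u l - ξ‖ := (Phi A k l).le_opNorm _
        _ ≤ N ^ ((1-l).toNat) * (‖u‖ + ‖ξ‖) := by
            apply mul_le_mul (norm_phi_le A hN hA hAinv k l _ (by omega)) _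
              (norm_nonneg _) (by positivity)
            calc ‖u l - ξ‖ ≤ ‖u l‖ + ‖ξ‖ := norm_sub_le _ _
              _ ≤ ‖u‖ + ‖ξ‖ := by
                  have := BoundedContinuousFunction.norm_coe_le_norm u l
                  linarith
  have hdecomp : Phi A 0 l ξ = u 0 - Phi A 0 l (u l - ξ) := by
    rw [map_sub, hu0eq]
    abel
  have hQval : Q0 (Phi A 0 l ξ) = u 0 := by
    rw [hdecomp, map_sub, hQ0W _ hu0W, hQ0U _ hζU, sub_zero]
  rw [hQval, hu0eq, phi_inv_apply]
  calc ‖u l‖ ≤ ‖u‖ := BoundedContinuousFunction.norm_coe_le_norm u l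
    _ ≤ K * ‖ξ‖ := hnu'

end Main
set_option maxHeartbeats 1000000 in
/-- If for every bounded sequence `{w_k}` the difference equation `v_{k+1} = A_k v_k + w_k`
has a bounded solution `{v_k}`, then the sequence `{A_k}` is hyperbolic on the ray `(-∞,0]`. -/
theorem hyperbolicOnMinusRay_of_bounded_solvability
    {m : ℕ} (A : ℤ → (EuclideanSpace ℝ (Fin m) ≃L[ℝ] EuclideanSpace ℝ (Fin m)))
    (N : ℝ) (hN : 0 < N)
    (hA : ∀ k : ℤ, ‖(A k : EuclideanSpace ℝ (Fin m) →L[ℝ] EuclideanSpace ℝ (Fin m))‖ ≤ N)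
    (hAinv : ∀ k : ℤ,
      ‖((A k).symm : EuclideanSpace ℝ (Fin m) →L[ℝ] EuclideanSpace ℝ (Fin m))‖ ≤ N)
    (hsolv : ∀ w : ℤ → EuclideanSpace ℝ (Fin m), (∃ C : ℝ, ∀ k : ℤ, ‖w k‖ ≤ C) →
      ∃ v : ℤ → EuclideanSpace ℝ (Fin m), (∃ C : ℝ, ∀ k : ℤ, ‖v k‖ ≤ C) ∧
        ∀ k : ℤ, v (k + 1) = A k (v k) + w k) :
    HyperbolicOnMinusRay A := by
  classical
  set E' := EuclideanSpace ℝ (Fin m)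
  have hN1 : (1:ℝ) ≤ max N 1 := le_max_right _ _
  have hA1 : ∀ k : ℤ, ‖(A k : E' →L[ℝ] E')‖ ≤ max N 1 :=
    fun k => le_trans (hA k) (le_max_left _ _)
  have hAinv1 : ∀ k : ℤ, ‖((A k).symm : E' →L[ℝ] E')‖ ≤ max N 1 :=
    fun k => le_trans (hAinv k) (le_max_left _ _)
  have hsplit := posBdd_sup_negBdd A hN1 hA1 hsolv
  obtain ⟨W, V', hWXs, hWV', hUW, hcomplVV', hXsV'W⟩ :=
    subspace_choice (PosBdd A) (NegBdd A) hsplit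
  obtain ⟨K, hK, key, hex⟩ := key_bound A hN1 hA1 hsolv V' hcomplVV'
  have hK0 : (0:ℝ) < K := by linarith
  -- the projection onto W along NegBdd A
  set Q0 : E' →ₗ[ℝ] E' :=
    W.subtype.comp (W.linearProjOfIsCompl (NegBdd A) hUW.symm) with hQ0f
  have hQ0mem : ∀ x : E', Q0 x ∈ W := fun x =>
    (W.linearProjOfIsCompl (NegBdd A) hUW.symm x).2
  have hQ0W : ∀ x ∈ W, Q0 x = x := by
    intro x hx
    exact congrArg Subtype.val
      (Submodule.linearProjOfIsCompl_apply_left hUW.symm ⟨x, hx⟩)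
  have hQ0U : ∀ x ∈ NegBdd A, Q0 x = 0 := by
    intro x hx
    have h1 : W.linearProjOfIsCompl (NegBdd A) hUW.symm x = 0 := by
      have := Submodule.linearProjOfIsCompl_apply_right hUW.symm ⟨x, hx⟩
      exact this
    show (W.subtype) (W.linearProjOfIsCompl (NegBdd A) hUW.symm x) = 0
    rw [h1]
    rfl
  have h1Q0U : ∀ x : E', x - Q0 x ∈ NegBdd A := by
    intro x
    have hx : x ∈ NegBdd A ⊔ W := by rw [hUW.sup_eq_top]; trivial
    obtain ⟨a, ha, b, hb, hab⟩ := Submodule.mem_sup.mp hx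
    have h2 : Q0 x = b := by
      rw [← hab, map_add, hQ0U a ha, hQ0W b hb, zero_add]
    rw [h2, ← hab, add_sub_cancel_right]
    exact ha
  set Q0c : E' →L[ℝ] E' := LinearMap.toContinuousLinearMap Q0 with hQ0cf
  have hQ0c : ∀ x : E', Q0c x = Q0 x := fun x => rfl
  set P : ℤ → (E' →L[ℝ] E') :=
    fun l => ((Phi A l 0).comp Q0c).comp (Phi A 0 l) with hPf
  have hPapp : ∀ (l : ℤ) (v : E'), P l v = Phi A l 0 (Q0 (Phi A 0 l v)) :=
    fun l v => rfl
  have hPbound : ∀ (l : ℤ), l ≤ 0 → ∀ v : E', ‖P l v‖ ≤ K * ‖v‖ := by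
    intro l hl v
    rw [hPapp]
    exact qproj_bound A hN1 hA1 hAinv1 V' W hXsV'W Q0 hQ0W hQ0U K hK hex l hl v
  set lam : ℝ := K / (K + 1) with hlamf
  have hlam0 : 0 < lam := by
    apply div_pos hK0
    linarith
  have hlam1 : lam < 1 := by
    rw [hlamf, div_lt_one (by linarith)]
    linarith
  have hlamn : ∀ n : ℕ, 0 ≤ lam ^ n := fun n => pow_nonneg (le_of_lt hlam0) n
  have hNmax1 : (0:ℝ) < max N 1 := by positivity
  set C : ℝ := (K+1) * (max N 1) * K + (K+1) * (K+1) with hCf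
  have hterm1 : (0:ℝ) < (K+1) * (max N 1) * K :=
    mul_pos (mul_pos (by linarith) hNmax1) hK0
  have hterm2 : (0:ℝ) < (K+1) * (K+1) := mul_pos (by linarith) (by linarith)
  refine ⟨C, lam, P, ?_, ⟨hlam0, hlam1⟩, ?_, ?_, ?_, ?_⟩
  · -- 0 < C
    rw [hCf]
    linarith
  · -- projections
    intro k _
    refine ContinuousLinearMap.ext fun v => ?_
    show P k (P k v) = P k v
    rw [hPapp, hPapp, phi_inv_apply, hQ0W _ (hQ0mem _)]
  · -- commutation
    intro k l _ _
    refine ContinuousLinearMap.ext fun v => ?_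
    show P k (Phi A k l v) = Phi A k l (P l v)
    rw [hPapp, hPapp, phi_comp_apply A 0 k l v, phi_comp_apply A k l 0]
  · -- stable estimate
    intro k l hlk hk0 v
    have hl0 : l ≤ 0 := le_trans hlk hk0
    have hη := hQ0mem (Phi A 0 l v)
    have h1 : Phi A k l (P l v) = Phi A k 0 (Q0 (Phi A 0 l v)) := by
      rw [hPapp, phi_comp_apply]
    have hst := stable_estimate A hN1 hA1 hAinv1 V' K hK key
      (Q0 (Phi A 0 l v)) (hWXs hη) (hWV' hη) l k hlk hk0
    have hqb : ‖Phi A l 0 (Q0 (Phi A 0 l v))‖ ≤ K * ‖v‖ := hPbound l hl0 v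
    have hcoef : (0:ℝ) ≤ (K+1) * (max N 1) * lam ^ (k-l).toNat := by
      apply mul_nonneg (mul_nonneg (by linarith) (le_of_lt hNmax1)) (hlamn _)
    calc ‖Phi A k l (P l v)‖ = ‖Phi A k 0 (Q0 (Phi A 0 l v))‖ := by rw [h1]
      _ ≤ (K+1) * (max N 1) * lam ^ (k-l).toNat * ‖Phi A l 0 (Q0 (Phi A 0 l v))‖ := hst
      _ ≤ (K+1) * (max N 1) * lam ^ (k-l).toNat * (K * ‖v‖) :=
          mul_le_mul_of_nonneg_left hqb hcoef
      _ = ((K+1) * (max N 1) * K) * lam ^ (k-l).toNat * ‖v‖ := by ring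
      _ ≤ C * lam ^ (k-l).toNat * ‖v‖ := by
          apply mul_le_mul_of_nonneg_right _ (norm_nonneg v)
          apply mul_le_mul_of_nonneg_right _ (hlamn _)
          rw [hCf]
          linarith
  · -- unstable estimate
    intro k l hkl hl0 v
    have hξ : Phi A 0 l v - Q0 (Phi A 0 l v) ∈ NegBdd A := h1Q0U _
    have h2 : (1 - P l) v = Phi A l 0 (Phi A 0 l v - Q0 (Phi A 0 l v)) := by
      rw [map_sub, phi_inv_apply]
      show v - P l v = v - Phi A l 0 (Q0 (Phi A 0 l v))
      rw [hPapp]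
    have h3 : Phi A k l ((1 - P l) v) = Phi A k 0 (Phi A 0 l v - Q0 (Phi A 0 l v)) := by
      rw [h2, phi_comp_apply]
    have hun := unstable_estimate A hN1 hA1 V' K hK key
      (Phi A 0 l v - Q0 (Phi A 0 l v)) hξ l hl0 k hkl
    have h4 : ‖Phi A l 0 (Phi A 0 l v - Q0 (Phi A 0 l v))‖ ≤ (1 + K) * ‖v‖ := by
      rw [map_sub, phi_inv_apply]
      calc ‖v - Phi A l 0 (Q0 (Phi A 0 l v))‖
          ≤ ‖v‖ + ‖Phi A l 0 (Q0 (Phi A 0 l v))‖ := norm_sub_le _ _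
        _ ≤ ‖v‖ + K * ‖v‖ := by
            have := hPbound l hl0 v
            rw [hPapp] at this
            linarith
        _ = (1 + K) * ‖v‖ := by ring
    have hcoef : (0:ℝ) ≤ (K+1) * lam ^ (l-k).toNat :=
      mul_nonneg (by linarith) (hlamn _)
    calc ‖Phi A k l ((1 - P l) v)‖
        = ‖Phi A k 0 (Phi A 0 l v - Q0 (Phi A 0 l v))‖ := by rw [h3]
      _ ≤ (K+1) * lam ^ (l-k).toNat * ‖Phi A l 0 (Phi A 0 l v - Q0 (Phi A 0 l v))‖ := hun
      _ ≤ (K+1) * lam ^ (l-k).toNat * ((1 + K) * ‖v‖) :=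
          mul_le_mul_of_nonneg_left h4 hcoef
      _ = ((K+1) * (1+K)) * lam ^ (l-k).toNat * ‖v‖ := by ring
      _ ≤ C * lam ^ (l-k).toNat * ‖v‖ := by
          apply mul_le_mul_of_nonneg_right _ (norm_nonneg v)
          apply mul_le_mul_of_nonneg_right _ (hlamn _)
          rw [hCf]
          linarith
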